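/- Let T be a #-terminated string and suppose LCP[i] = ℓ + 1 ≥ 2 for some position i > 1 of the LCP array of T, where the suffix at position i starts with a·b·V for characters a, b and a string V with |bV| = ℓ + 1 being a prefix realizing the LCP. Then LCP[right(bV) + 1] = ℓ, where right(bV) is the last position of the suffix-array range of bV. -/
import Mathlib


/-- Length of the longest common prefix of two lists. -/
def lcpLen {α : Type*} [DecidableEq α] : List α → List α → ℕ
  | a :: as, b :: bs => if a = b then lcpLen as bs + 1 else 0
  | _, _ => 0

section Aux
variable {α : Type*}

theorem lcpLen_nil_left [DecidableEq α] (y : List α) : lcpLen ([] : List α) y = 0 := by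
  cases y <;> rfl

theorem lcpLen_nil_right [DecidableEq α] (x : List α) : lcpLen x ([] : List α) = 0 := by
  cases x <;> rfl

theorem lcpLen_cons_cons [DecidableEq α] (a b : α) (x y : List α) :
    lcpLen (a :: x) (b :: y) = if a = b then lcpLen x y + 1 else 0 := rfl

theorem lcpLen_append [DecidableEq α] (p x y : List α) :
    lcpLen (p ++ x) (p ++ y) = p.length + lcpLen x y := by
  induction p with
  | nil => simp [lcpLen_nil_left]
  | cons a p ih => simp [lcpLen_cons_cons, ih]; omega

theorem take_lcpLen [DecidableEq α] : ∀ x y : List α,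
    x.take (lcpLen x y) = y.take (lcpLen x y)
  | [], y => by simp [lcpLen_nil_left]
  | a :: as, [] => by simp [lcpLen_nil_right]
  | a :: as, b :: bs => by
    by_cases h : a = b
    · subst h
      have h : lcpLen (a :: as) (a :: bs) = lcpLen as bs + 1 := by
        rw [lcpLen_cons_cons, if_pos rfl]
      rw [h, List.take_succ_cons, List.take_succ_cons, take_lcpLen as bs]
    · simp [lcpLen_cons_cons, h]

theorem not_lt_nil [LinearOrder α] (x : List α) : ¬ (x < ([] : List α)) := by
  intro h
  have h' : List.Lex (· < ·) x [] := h
  cases h'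

theorem not_cons_le_nil [LinearOrder α] (a : α) (x : List α) : ¬ (a :: x ≤ ([] : List α)) := by
  intro h
  rcases lt_or_eq_of_le h with h | h
  · exact not_lt_nil _ h
  · simp at h

theorem cons_lt_iff [LinearOrder α] {a b : α} {x y : List α} :
    a :: x < b :: y ↔ a < b ∨ (a = b ∧ x < y) := by
  constructor
  · intro h
    have h' : List.Lex (· < ·) (a :: x) (b :: y) := h
    cases h' with
    | cons h => exact Or.inr ⟨rfl, h⟩
    | rel h => exact Or.inl h
  · rintro (h | ⟨rfl, h⟩)
    · exact List.Lex.rel h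
    · exact List.Lex.cons h

theorem cons_le_iff [LinearOrder α] {a b : α} {x y : List α} :
    a :: x ≤ b :: y ↔ a < b ∨ (a = b ∧ x ≤ y) := by
  rw [le_iff_lt_or_eq, le_iff_lt_or_eq, cons_lt_iff]
  simp only [List.cons.injEq]
  tauto

theorem lt_of_append_lt [LinearOrder α] : ∀ (p x y : List α), p ++ x < p ++ y → x < y
  | [], x, y, h => h
  | a :: p, x, y, h => by
    rcases cons_lt_iff.mp h with h | ⟨_, h⟩
    · exact absurd h (lt_irrefl a)
    · exact lt_of_append_lt p x y h

theorem lcpLen_le_of_le [LinearOrder α] : ∀ (x y z : List α),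
    x ≤ y → y ≤ z → lcpLen x z ≤ lcpLen x y
  | [], _, _, _, _ => by simp [lcpLen_nil_left]
  | _ :: _, _, [], _, _ => by simp [lcpLen_nil_right]
  | a :: x, y, c :: z, hxy, hyz => by
    by_cases hac : a = c
    · subst hac
      match y, hxy, hyz with
      | [], hxy, _ => exact absurd hxy (not_cons_le_nil _ _)
      | e :: y, hxy, hyz =>
        rcases cons_le_iff.mp hxy with h1 | ⟨rfl, h1⟩
        · rcases cons_le_iff.mp hyz with h2 | ⟨rfl, h2⟩
          · exact absurd (h1.trans h2) (lt_irrefl _)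
          · exact absurd h1 (lt_irrefl _)
        · rcases cons_le_iff.mp hyz with h2 | ⟨he, h2⟩
          · exact absurd h2 (lt_irrefl _)
          · simp only [lcpLen_cons_cons, if_pos rfl]
            exact Nat.succ_le_succ (lcpLen_le_of_le x y z h1 h2)
    · simp [lcpLen_cons_cons, hac]

end Aux

/-- Let `T` be a `#`-terminated string with sorted suffix enumeration `S` and
`LCP[i] = lcpLen (S (i-1)) (S i)`. Suppose `LCP[i] = ℓ + 1 ≥ 2`, and `abV` (with
`|bV| = ℓ+1`, i.e. `|V| = ℓ`) is a prefix of the suffix at position `i-1` whose range ends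
at `i - 1` (i.e. `right(abV) + 1 = i`). Then `LCP[right(bV) + 1] = ℓ`, where `right(bV)`
is the last position of the suffix-array range of `bV`. -/
theorem lcp_of_shortened_extension {α : Type*} [LinearOrder α]
    (T : List α) (hash : α) (n : ℕ)
    (hn : T.length = n)
    (hne : T ≠ [])
    (hlast : T.getLast hne = hash)
    (honce : hash ∉ T.dropLast)
    (hmin : ∀ a : α, a ≠ hash → hash < a)
    (S : ℕ → List α)
    (hsuf : ∀ i, 1 ≤ i → i ≤ n → S i <:+ T ∧ S i ≠ [])
    (henum : ∀ s : List α, s <:+ T → s ≠ [] → ∃ i, 1 ≤ i ∧ i ≤ n ∧ S i = s)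
    (hsorted : ∀ i j, 1 ≤ i → i < j → j ≤ n → S i < S j)
    (i ℓ : ℕ) (a b : α) (V : List α)
    (hi1 : 1 < i) (hin : i ≤ n)
    (hℓ : 1 ≤ ℓ) (hV : V.length = ℓ)
    (hlcp : lcpLen (S (i - 1)) (S i) = ℓ + 1)
    (hpref : (a :: b :: V) <+: S (i - 1))
    (hright : ∀ j, i ≤ j → j ≤ n → ¬(a :: b :: V) <+: S j) :
    ∀ r, 1 ≤ r → r < n → (b :: V) <+: S r →
      (∀ j, r < j → j ≤ n → ¬(b :: V) <+: S j) →
      lcpLen (S r) (S (r + 1)) = ℓ := by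
  
  intro r hr1 hrn hbVr hmax
  -- decompose V
  have hVne : V ≠ [] := by intro h; rw [h] at hV; simp at hV; omega
  set W : List α := V.dropLast with hWdef
  set v : α := V.getLast hVne with hvdef
  have hVdec : V = W ++ [v] := (List.dropLast_append_getLast hVne).symm
  have hWlen : W.length = ℓ - 1 := by rw [hWdef, List.length_dropLast, hV]
  set P : List α := a :: b :: W with hPdef
  have hPlen : P.length = ℓ + 1 := by simp [hPdef, hWlen]; omega
  have habV : a :: b :: V = P ++ [v] := by rw [hVdec]; simp [hPdef]
  -- suffix at i-1 and i
  have hi1n : 1 ≤ i - 1 := by omega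
  have hi1n' : i - 1 ≤ n := by omega
  have hlt : S (i - 1) < S i := hsorted (i - 1) i hi1n (by omega) hin
  -- take (ℓ+1) of both is P
  have hPpref : P <+: S (i - 1) := ((List.prefix_append P [v]).trans (habV ▸ hpref))
  have h1 : (S (i - 1)).take (ℓ + 1) = P := by
    have := List.prefix_iff_eq_take.mp hPpref
    rw [hPlen] at this; exact this.symm
  have h2 : (S i).take (ℓ + 1) = P := by
    have := take_lcpLen (S (i - 1)) (S i)
    rw [hlcp] at this
    rw [← this, h1]
  set u : List α := (S (i - 1)).drop (ℓ + 1) with hudef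
  set w : List α := (S i).drop (ℓ + 1) with hwdef
  have hSi1 : S (i - 1) = P ++ u := by rw [← h1, hudef]; exact (List.take_append_drop _ _).symm
  have hSi : S i = P ++ w := by rw [← h2, hwdef]; exact (List.take_append_drop _ _).symm
  -- u starts with v
  have hvu : [v] <+: u := by
    have : P ++ [v] <+: P ++ u := by rw [← hSi1, ← habV]; exact hpref
    exact (List.prefix_append_right_inj P).mp this
  obtain ⟨t, hut⟩ := hvu
  have hu : u = v :: t := hut.symm
  -- u < w, w nonempty
  have huw : u < w := lt_of_append_lt P u w (by rw [← hSi1, ← hSi]; exact hlt)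
  obtain ⟨c, w', hw⟩ : ∃ c w', w = c :: w' := by
    cases hwe : w with
    | nil => rw [hu, hwe] at huw; exact absurd huw (not_lt_nil _)
    | cons c w' => exact ⟨c, w', rfl⟩
  -- lcpLen u w = 0, hence v ≠ c and v < c
  have hlcp0 : lcpLen u w = 0 := by
    rw [hSi1, hSi, lcpLen_append, hPlen] at hlcp; omega
  have hvc : v ≠ c := by
    intro h
    rw [hu, hw, ← h, lcpLen_cons_cons, if_pos rfl] at hlcp0
    omega
  have hvlt : v < c := by
    rw [hu, hw] at huw
    rcases cons_lt_iff.mp huw with h | ⟨h, _⟩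
    · exact h
    · exact absurd h hvc
  -- the suffix Q = (b :: W) ++ c :: w'
  set Q : List α := (b :: W) ++ c :: w' with hQdef
  have hQ : S i = a :: Q := by rw [hSi, hw, hPdef, hQdef]; simp
  have hQsuf : Q <:+ T := by
    have hSiT : S i <:+ T := (hsuf i (by omega) hin).1
    exact (List.suffix_cons a Q).trans (hQ ▸ hSiT)
  obtain ⟨m, hm1, hmn, hSm⟩ := henum Q hQsuf (by simp [hQdef])
  -- S r = (b :: W) ++ v :: z
  obtain ⟨z, hz⟩ := hbVr
  have hSr : S r = (b :: W) ++ v :: z := by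
    rw [← hz, hVdec]; simp
  have hbWlen : (b :: W).length = ℓ := by simp [hWlen]; omega
  -- lcpLen (S r) (S m) = ℓ
  have hlcprm : lcpLen (S r) (S m) = ℓ := by
    rw [hSr, hSm, hQdef, lcpLen_append, hbWlen, lcpLen_cons_cons, if_neg hvc]; omega
  -- S r < S m, hence r < m
  have hrm : S r < S m := by
    rw [hSr, hSm, hQdef]
    exact List.Lex.append_left _ (List.Lex.rel hvlt) _
  have hrltm : r < m := by
    by_contra h
    push_neg at h
    rcases lt_or_eq_of_le h with h | h
    · exact absurd (hrm.trans (hsorted m r hm1 h (by omega))) (lt_irrefl _)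
    · rw [h] at hrm; exact absurd hrm (lt_irrefl _)
  -- upper bound
  have hub : lcpLen (S r) (S (r + 1)) ≤ ℓ := by
    by_contra h
    push_neg at h
    have hk : ℓ + 1 ≤ lcpLen (S r) (S (r + 1)) := h
    have htk := take_lcpLen (S r) (S (r + 1))
    have htake : (S (r + 1)).take (ℓ + 1) = (S r).take (ℓ + 1) := by
      have e1 : (S r).take (ℓ + 1) = ((S r).take (lcpLen (S r) (S (r + 1)))).take (ℓ + 1) := by
        rw [List.take_take, min_eq_left hk]
      have e2 : (S (r + 1)).take (ℓ + 1)
          = ((S (r + 1)).take (lcpLen (S r) (S (r + 1)))).take (ℓ + 1) := by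
        rw [List.take_take, min_eq_left hk]
      rw [e1, e2, htk]
    have hbv1 : (S r).take (ℓ + 1) = b :: V := by
      have : (b :: V).length = ℓ + 1 := by simp [hV]
      rw [← hz, ← this, List.take_left]
    have : (b :: V) <+: S (r + 1) := by
      rw [← hbv1, ← htake]; exact List.take_prefix _ _
    exact hmax (r + 1) (by omega) (by omega) this
  -- lower bound
  have hlb : ℓ ≤ lcpLen (S r) (S (r + 1)) := by
    rcases eq_or_lt_of_le (show r + 1 ≤ m by omega) with h | h
    · rw [← h] at hlcprm; omega
    · have hle1 : S r ≤ S (r + 1) := le_of_lt (hsorted r (r + 1) hr1 (by omega) (by omega))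
      have hle2 : S (r + 1) ≤ S m := le_of_lt (hsorted (r + 1) m (by omega) h hmn)
      have := lcpLen_le_of_le (S r) (S (r + 1)) (S m) hle1 hle2
      rw [hlcprm] at this; exact this
  omega
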